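/- Let β : ℝ → ℝ be a convex function and β*(α) = inf_{q∈ℝ}(β(q) − qα) its (concave) conjugate on its domain D = {α : β*(α) > −∞}. If β_i is a sequence of convex functions converging pointwise to β, then β_i*(α) → β*(α) for every α in the interior of D. -/

import Mathlib

open Filter

private lemma chord_right {g : ℝ → ℝ} (hg : ConvexOn ℝ Set.univ g) {u x q : ℝ}
    (hux : u < x) (hxq : x ≤ q) :
    g x + (g x - g u) / (x - u) * (q - x) ≤ g q := by
  rcases eq_or_lt_of_le hxq with rfl | h
  · simp
  · have hs := hg.slope_mono_adjacent (Set.mem_univ u) (Set.mem_univ q) hux h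
    have hq : 0 < q - x := by linarith
    have := (le_div_iff₀ hq).mp hs
    linarith

private lemma chord_left {g : ℝ → ℝ} (hg : ConvexOn ℝ Set.univ g) {q x v : ℝ}
    (hqx : q ≤ x) (hxv : x < v) :
    g x + (g v - g x) / (v - x) * (q - x) ≤ g q := by
  rcases eq_or_lt_of_le hqx with rfl | h
  · simp
  · have hs := hg.slope_mono_adjacent (Set.mem_univ q) (Set.mem_univ v) h hxv
    have hq : 0 < x - q := by linarith
    have h1 := (div_le_iff₀ hq).mp hs
    have h2 : (g v - g x) / (v - x) * (q - x) = -((g v - g x) / (v - x) * (x - q)) := by ring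
    linarith

private lemma key_liminf {f : ℝ → ℝ} {fs : ℕ → ℝ → ℝ} (hf : ConvexOn ℝ Set.univ f)
    (hfs : ∀ i, ConvexOn ℝ Set.univ (fs i))
    (hc : ∀ q, Tendsto (fun i => fs i q) atTop (nhds (f q)))
    {c δ : ℝ} (hδ : 0 < δ) (hcoer : ∀ q, c + δ * |q| ≤ f q)
    {m : ℝ} (hm : ∀ q, m ≤ f q) {ε : ℝ} (hε : 0 < ε) :
    ∀ᶠ i in atTop, ∀ q, m - ε ≤ fs i q := by
  set P : ℝ := max 1 ((f 0 + 1 - c) / δ) with hPdef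
  have hP1 : (1 : ℝ) ≤ P := le_max_left _ _
  have hP0 : (0 : ℝ) < P := lt_of_lt_of_le one_pos hP1
  have hPc : f 0 + 1 - c ≤ δ * P := by
    have : (f 0 + 1 - c) / δ ≤ P := le_max_right _ _
    calc f 0 + 1 - c = δ * ((f 0 + 1 - c) / δ) := by field_simp
    _ ≤ δ * P := by nlinarith
  have hfP : f 0 + 1 ≤ f P := by
    have := hcoer P
    rw [abs_of_pos hP0] at this
    linarith
  have hfmP : f 0 + 1 ≤ f (-P) := by
    have := hcoer (-P)
    rw [abs_of_neg (by linarith : -P < 0)] at this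
    linarith
  -- local Lipschitz-type bounds
  set K : ℝ → ℝ := fun x => |f x - f (x - 1)| + |f (x + 1) - f x| + 1 with hKdef
  have hK : ∀ x, 0 < K x := fun x => by
    have := abs_nonneg (f x - f (x - 1)); have := abs_nonneg (f (x + 1) - f x)
    simp only [hKdef]; linarith
  set r : ℝ → ℝ := fun x => (ε / 2) / K x with hrdef
  have hr : ∀ x, 0 < r x := fun x => div_pos (by linarith) (hK x)
  -- pointwise eventual estimates
  have hE : ∀ x : ℝ, ∀ᶠ i in atTop, f x - ε / 2 < fs i x ∧
      |fs i x - fs i (x - 1)| < K x ∧ |fs i (x + 1) - fs i x| < K x := by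
    intro x
    have e1 : ∀ᶠ i in atTop, f x - ε / 2 < fs i x :=
      (hc x).eventually_const_lt (by linarith)
    have e2 : ∀ᶠ i in atTop, |fs i x - fs i (x - 1)| < K x := by
      have ht : Tendsto (fun i => |fs i x - fs i (x - 1)|) atTop (nhds (|f x - f (x - 1)|)) :=
        ((hc x).sub (hc (x - 1))).abs
      refine ht.eventually_lt_const ?_
      have := abs_nonneg (f (x + 1) - f x)
      simp only [hKdef]; linarith
    have e3 : ∀ᶠ i in atTop, |fs i (x + 1) - fs i x| < K x := by
      have ht : Tendsto (fun i => |fs i (x + 1) - fs i x|) atTop (nhds (|f (x + 1) - f x|)) :=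
        ((hc (x + 1)).sub (hc x)).abs
      refine ht.eventually_lt_const ?_
      have := abs_nonneg (f x - f (x - 1))
      simp only [hKdef]; linarith
    exact e1.and (e2.and e3)
  -- the local bound
  have claim : ∀ i x q, (f x - ε / 2 < fs i x ∧
      |fs i x - fs i (x - 1)| < K x ∧ |fs i (x + 1) - fs i x| < K x) →
      |q - x| < r x → m - ε ≤ fs i q := by
    intro i x q ⟨h1, h2, h3⟩ hq
    have hKr : K x * r x = ε / 2 := by
      have hKx := (hK x).ne'
      simp only [hrdef]; field_simp
    have habs : 0 ≤ |q - x| := abs_nonneg _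
    rcases le_total x q with hxq | hqx
    · have hch := chord_right (hfs i) (by linarith : x - 1 < x) hxq
      have hd : x - (x - 1) = 1 := by ring
      rw [hd, div_one] at hch
      have hb : |(fs i x - fs i (x - 1)) * (q - x)| ≤ K x * r x := by
        rw [abs_mul]
        exact mul_le_mul h2.le hq.le habs (hK x).le
      have hnb := neg_abs_le ((fs i x - fs i (x - 1)) * (q - x))
      have hmx := hm x
      have s1 : -(ε/2) ≤ (fs i x - fs i (x - 1)) * (q - x) := by rw [hKr] at hb; linarith [hb, hnb]
      have s2 : fs i x - ε/2 ≤ fs i q := by linarith [hch, s1]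
      linarith [s2, h1, hmx]
    · have hch := chord_left (hfs i) hqx (by linarith : x < x + 1)
      have hd : x + 1 - x = 1 := by ring
      rw [hd, div_one] at hch
      have hb : |(fs i (x + 1) - fs i x) * (q - x)| ≤ K x * r x := by
        rw [abs_mul, abs_sub_comm q x] at *
        exact mul_le_mul h3.le hq.le habs (hK x).le
      have hnb := neg_abs_le ((fs i (x + 1) - fs i x) * (q - x))
      have hmx := hm x
      rw [hKr] at hb
      linarith [hb, hnb, hch, h1, hmx]
  -- tails
  have hER : ∀ᶠ i in atTop, 1 / 2 < fs i P - fs i 0 ∧ m - ε < fs i P := by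
    have e1 : ∀ᶠ i in atTop, 1 / 2 < fs i P - fs i 0 :=
      (((hc P).sub (hc 0))).eventually_const_lt (by linarith)
    have e2 : ∀ᶠ i in atTop, m - ε < fs i P :=
      (hc P).eventually_const_lt (by have := hm P; linarith)
    exact e1.and e2
  have hEL : ∀ᶠ i in atTop, 1 / 2 < fs i (-P) - fs i 0 ∧ m - ε < fs i (-P) := by
    have e1 : ∀ᶠ i in atTop, 1 / 2 < fs i (-P) - fs i 0 :=
      (((hc (-P)).sub (hc 0))).eventually_const_lt (by linarith)
    have e2 : ∀ᶠ i in atTop, m - ε < fs i (-P) :=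
      (hc (-P)).eventually_const_lt (by have := hm (-P); linarith)
    exact e1.and e2
  -- compactness
  obtain ⟨t, -, hcov⟩ := (isCompact_Icc (a := -P) (b := P)).elim_nhds_subcover
    (fun x => Metric.ball x (r x)) (fun x _ => Metric.ball_mem_nhds x (hr x))
  have hmid : ∀ᶠ i in atTop, ∀ x ∈ t, f x - ε / 2 < fs i x ∧
      |fs i x - fs i (x - 1)| < K x ∧ |fs i (x + 1) - fs i x| < K x :=
    (eventually_all_finset t).2 fun x _ => hE x
  filter_upwards [hmid, hER, hEL] with i hmi ⟨hR1, hR2⟩ ⟨hL1, hL2⟩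
  intro q
  rcases le_total q (-P) with hq | hq
  · have hch := chord_left (hfs i) hq (by linarith : -P < 0)
    have hsl : (fs i 0 - fs i (-P)) / (0 - -P) < 0 := by
      apply div_neg_of_neg_of_pos <;> linarith
    have hprod : 0 ≤ (fs i 0 - fs i (-P)) / (0 - -P) * (q - -P) := by
      have hq2 : q - -P ≤ 0 := by linarith
      nlinarith [hsl.le, hq2]
    linarith
  rcases le_total q P with hq' | hq'
  · have hqmem : q ∈ Set.Icc (-P) P := ⟨hq, hq'⟩
    have := hcov hqmem
    rw [Set.mem_iUnion₂] at this
    obtain ⟨x, hxt, hqb⟩ := this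
    rw [Metric.mem_ball, Real.dist_eq] at hqb
    exact claim i x q (hmi x hxt) hqb
  · have hch := chord_right (hfs i) hP0 hq'
    have hsl : 0 < (fs i P - fs i 0) / (P - 0) := by
      apply div_pos <;> linarith
    have hprod : 0 ≤ (fs i P - fs i 0) / (P - 0) * (q - P) :=
      mul_nonneg hsl.le (by linarith)
    linarith

/-- Let `β : ℝ → ℝ` be a convex function and `β*(α) = inf_{q∈ℝ}(β(q) − qα)` its (concave)
conjugate, with domain `D = {α : β*(α) > −∞}` (i.e. the set of `α` for which the infimum is
finite). If `β_i` is a sequence of convex functions converging pointwise to `β`, then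
`β_i*(α) → β*(α)` for every `α` in the interior of `D`. -/
theorem conjugate_tendsto_of_convex_tendsto (β : ℝ → ℝ) (βi : ℕ → ℝ → ℝ)
    (hβ : ConvexOn ℝ Set.univ β) (hβi : ∀ i, ConvexOn ℝ Set.univ (βi i))
    (hconv : ∀ q : ℝ, Filter.Tendsto (fun i => βi i q) Filter.atTop (nhds (β q)))
    (α : ℝ)
    (hα : α ∈ interior {a : ℝ | BddBelow (Set.range fun q : ℝ => β q - q * a)}) :
    Filter.Tendsto (fun i => ⨅ q : ℝ, (βi i q - q * α)) Filter.atTop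
      (nhds (⨅ q : ℝ, (β q - q * α))) := by
  have hα0' : α ∈ {a : ℝ | BddBelow (Set.range fun q : ℝ => β q - q * a)} :=
    interior_subset hα
  have hα0 : BddBelow (Set.range fun q : ℝ => β q - q * α) := hα0'
  -- linear functions are convex
  have hlin : ∀ a : ℝ, ConvexOn ℝ Set.univ (fun q : ℝ => q * a) := fun a =>
    ⟨convex_univ, fun x _ y _ p s _ _ _ => le_of_eq (by simp [smul_eq_mul]; ring)⟩
  have hf : ConvexOn ℝ Set.univ (fun q : ℝ => β q - q * α) := by
    have := hβ.add (hlin (-α))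
    convert this using 2 with q
    · rfl
    simp only [Pi.add_apply]; ring
  have hfs : ∀ i, ConvexOn ℝ Set.univ (fun q : ℝ => βi i q - q * α) := fun i => by
    have := (hβi i).add (hlin (-α))
    convert this using 2 with q
    · rfl
    simp only [Pi.add_apply]; ring
  have hc : ∀ q : ℝ, Tendsto (fun i => βi i q - q * α) atTop (nhds (β q - q * α)) :=
    fun q => (hconv q).sub tendsto_const_nhds
  -- coercivity
  rw [mem_interior_iff_mem_nhds, Metric.mem_nhds_iff] at hα
  obtain ⟨d, hd0, hball⟩ := hα
  have hmem1 : (α - d / 2) ∈ Metric.ball α d := by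
    rw [Metric.mem_ball, Real.dist_eq]
    rw [abs_of_nonpos (by linarith)]
    linarith
  have hmem2 : (α + d / 2) ∈ Metric.ball α d := by
    rw [Metric.mem_ball, Real.dist_eq]
    rw [abs_of_nonneg (by linarith)]
    linarith
  obtain ⟨c₁, hc₁⟩ := hball hmem1
  obtain ⟨c₂, hc₂⟩ := hball hmem2
  have hc₁' : ∀ q : ℝ, c₁ ≤ β q - q * (α - d / 2) := fun q => hc₁ (Set.mem_range_self q)
  have hc₂' : ∀ q : ℝ, c₂ ≤ β q - q * (α + d / 2) := fun q => hc₂ (Set.mem_range_self q)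
  have hcoer : ∀ q : ℝ, min c₁ c₂ + (d / 2) * |q| ≤ β q - q * α := by
    intro q
    rcases le_total q 0 with hq | hq
    · rw [abs_of_nonpos hq]
      have := hc₁' q
      have := min_le_left c₁ c₂
      nlinarith
    · rw [abs_of_nonneg hq]
      have := hc₂' q
      have := min_le_right c₁ c₂
      nlinarith
  set m : ℝ := ⨅ q : ℝ, (β q - q * α) with hmdef
  have hm : ∀ q : ℝ, m ≤ β q - q * α := fun q => ciInf_le hα0 q
  rw [Metric.tendsto_nhds]
  intro ε hε
  have hA := key_liminf hf hfs hc (by linarith : (0:ℝ) < d / 2) hcoer hm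
    (by linarith : (0:ℝ) < ε / 2)
  obtain ⟨q₀, hq₀⟩ : ∃ q₀ : ℝ, β q₀ - q₀ * α < m + ε / 2 :=
    exists_lt_of_ciInf_lt (by linarith : m < m + ε / 2)
  have hB : ∀ᶠ i in atTop, βi i q₀ - q₀ * α < m + ε / 2 :=
    (hc q₀).eventually_lt_const hq₀
  filter_upwards [hA, hB] with i hAi hBi
  have hlow : m - ε / 2 ≤ ⨅ q : ℝ, (βi i q - q * α) := le_ciInf hAi
  have hhigh : (⨅ q : ℝ, (βi i q - q * α)) ≤ βi i q₀ - q₀ * α := by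
    apply ciInf_le
    exact ⟨m - ε / 2, by rintro y ⟨q, rfl⟩; exact hAi q⟩
  rw [Real.dist_eq, abs_sub_lt_iff]
  constructor <;> linarith
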